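/- Let A₁ ∈ Mₙ₁(ℂ), A₂ ∈ Mₙ₂(ℂ) with ‖A₁‖ = ‖A₂‖ ≠ 0, and suppose there are unit vectors z₁ ∈ ℂ^{n₁}, z₂ ∈ ℂ^{n₂} with z₁* A₁ z₁ = z₂* A₂ z₂ = λ ≠ 0 (a common nonzero numerical range value). Then R = z₁z₁* ⊕ (−z₂z₂*) is Birkhoff–James orthogonal to A = A₁ ⊕ A₂ in Mₙ₁(ℂ) ⊕ Mₙ₂(ℂ) with the max norm. -/

import Mathlib

open Matrix

/-- The operator (spectral) norm of a complex matrix, induced by the Euclidean norm on `ℂⁿ`. -/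
noncomputable def opNorm {n : ℕ} (A : Matrix (Fin n) (Fin n) ℂ) : ℝ :=
  ‖Matrix.toEuclideanCLM (𝕜 := ℂ) (n := Fin n) A‖

/-- Birkhoff–James orthogonality on the direct sum `Mₙ₁(ℂ) ⊕ Mₙ₂(ℂ)` with the max norm. -/
def BJ2 {n₁ n₂ : ℕ} (A B : Matrix (Fin n₁) (Fin n₁) ℂ × Matrix (Fin n₂) (Fin n₂) ℂ) : Prop :=
  ∀ c : ℂ, max (opNorm A.1) (opNorm A.2) ≤
    max (opNorm (A.1 + c • B.1)) (opNorm (A.2 + c • B.2))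

lemma vecMulVec_mulVec' {n : ℕ} (w v x : Fin n → ℂ) :
    (Matrix.vecMulVec w v).mulVec x = (dotProduct v x) • w := by
  ext i
  simp [Matrix.mulVec, dotProduct, Matrix.vecMulVec_apply, Finset.mul_sum,
    mul_comm, mul_left_comm]

lemma norm_ez {n : ℕ} (z : Fin n → ℂ) (hz : dotProduct (star z) z = 1) :
    ‖(WithLp.equiv 2 (Fin n → ℂ)).symm z‖ = 1 := by
  set ez : EuclideanSpace ℂ (Fin n) := (WithLp.equiv 2 (Fin n → ℂ)).symm z
  have h : (inner ℂ ez ez : ℂ) = 1 := by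
    rw [show ez = WithLp.toLp 2 z from rfl, EuclideanSpace.inner_toLp_toLp, dotProduct_comm]; exact hz
  have h2 : ‖ez‖ ^ 2 = 1 := by
    rw [← inner_self_eq_norm_sq (𝕜 := ℂ), h]; simp
  nlinarith [norm_nonneg ez]

lemma abs_dot_le_opNorm {n : ℕ} (M : Matrix (Fin n) (Fin n) ℂ) (z : Fin n → ℂ)
    (hz : dotProduct (star z) z = 1) :
    ‖dotProduct (star z) (M.mulVec z)‖ ≤ opNorm M := by
  set ez : EuclideanSpace ℂ (Fin n) := (WithLp.equiv 2 (Fin n → ℂ)).symm z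
  have hez : ‖ez‖ = 1 := norm_ez z hz
  have key : dotProduct (star z) (M.mulVec z)
      = inner ℂ ez (Matrix.toEuclideanCLM (𝕜 := ℂ) M ez) := by
    rw [show ez = WithLp.toLp 2 z from rfl, Matrix.toEuclideanCLM_toLp,
      EuclideanSpace.inner_toLp_toLp, dotProduct_comm]
  rw [key]
  calc ‖(inner ℂ ez (Matrix.toEuclideanCLM (𝕜 := ℂ) M ez) : ℂ)‖
      ≤ ‖ez‖ * ‖Matrix.toEuclideanCLM (𝕜 := ℂ) M ez‖ := norm_inner_le_norm _ _
    _ ≤ ‖ez‖ * (‖Matrix.toEuclideanCLM (𝕜 := ℂ) M‖ * ‖ez‖) :=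
        mul_le_mul_of_nonneg_left (ContinuousLinearMap.le_opNorm _ _) (norm_nonneg _)
    _ = opNorm M := by rw [hez, one_mul, mul_one]; rfl

lemma opNorm_vecMulVec_le {n : ℕ} (z : Fin n → ℂ)
    (hz : dotProduct (star z) z = 1) :
    opNorm (Matrix.vecMulVec z (star z)) ≤ 1 := by
  unfold opNorm
  apply ContinuousLinearMap.opNorm_le_bound _ zero_le_one
  intro x
  set zx := (WithLp.equiv 2 (Fin n → ℂ)) x
  have happ : Matrix.toEuclideanCLM (𝕜 := ℂ) (Matrix.vecMulVec z (star z)) x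
      = (WithLp.equiv 2 (Fin n → ℂ)).symm ((dotProduct (star z) zx) • z) := by
    show Matrix.toEuclideanCLM (𝕜 := ℂ) _ (WithLp.toLp 2 zx) = WithLp.toLp 2 _
    rw [Matrix.toEuclideanCLM_toLp, vecMulVec_mulVec']
  rw [happ]
  have hez : ‖(WithLp.equiv 2 (Fin n → ℂ)).symm z‖ = 1 := norm_ez z hz
  have : (WithLp.equiv 2 (Fin n → ℂ)).symm ((dotProduct (star z) zx) • z)
      = (dotProduct (star z) zx) • (WithLp.equiv 2 (Fin n → ℂ)).symm z := rfl
  rw [this, norm_smul, hez, mul_one]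
  have hinner : dotProduct (star z) zx
      = inner ℂ ((WithLp.equiv 2 (Fin n → ℂ)).symm z) x := by
    rw [EuclideanSpace.inner_eq_star_dotProduct, dotProduct_comm]
    rfl
  rw [hinner]
  calc ‖(inner ℂ ((WithLp.equiv 2 (Fin n → ℂ)).symm z) x : ℂ)‖
      ≤ ‖(WithLp.equiv 2 (Fin n → ℂ)).symm z‖ * ‖x‖ := norm_inner_le_norm _ _
    _ = 1 * ‖x‖ := by rw [hez]

/-- If `‖A₁‖ = ‖A₂‖ ≠ 0` and unit vectors `z₁, z₂` give the same nonzero numerical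
range value `λ`, then `R = z₁z₁* ⊕ (−z₂z₂*)` is BJ-orthogonal to `A = A₁ ⊕ A₂`. -/
theorem stmt14 {n₁ n₂ : ℕ}
    (A₁ : Matrix (Fin n₁) (Fin n₁) ℂ) (A₂ : Matrix (Fin n₂) (Fin n₂) ℂ)
    (hnorm : opNorm A₁ = opNorm A₂) (hne : opNorm A₁ ≠ 0)
    (z₁ : Fin n₁ → ℂ) (z₂ : Fin n₂ → ℂ)
    (hz₁ : dotProduct (star z₁) z₁ = 1)
    (hz₂ : dotProduct (star z₂) z₂ = 1)
    (l : ℂ) (hl : l ≠ 0)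
    (h₁ : dotProduct (star z₁) (A₁.mulVec z₁) = l)
    (h₂ : dotProduct (star z₂) (A₂.mulVec z₂) = l) :
    BJ2 (Matrix.vecMulVec z₁ (star z₁), -(Matrix.vecMulVec z₂ (star z₂))) (A₁, A₂) := by
  intro c
  simp only
  -- LHS ≤ 1
  have hR₁ : opNorm (Matrix.vecMulVec z₁ (star z₁)) ≤ 1 := opNorm_vecMulVec_le z₁ hz₁
  have hR₂ : opNorm (-(Matrix.vecMulVec z₂ (star z₂))) ≤ 1 := by
    have : opNorm (-(Matrix.vecMulVec z₂ (star z₂))) = opNorm (Matrix.vecMulVec z₂ (star z₂)) := by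
      unfold opNorm; rw [map_neg, norm_neg]
    rw [this]; exact opNorm_vecMulVec_le z₂ hz₂
  have hLHS : max (opNorm (Matrix.vecMulVec z₁ (star z₁)))
      (opNorm (-(Matrix.vecMulVec z₂ (star z₂)))) ≤ 1 := max_le hR₁ hR₂
  refine le_trans hLHS ?_
  -- RHS ≥ 1 : use the witness vectors
  have d₁ : dotProduct (star z₁)
      ((Matrix.vecMulVec z₁ (star z₁) + c • A₁).mulVec z₁) = 1 + c * l := by
    rw [Matrix.add_mulVec, dotProduct_add, Matrix.smul_mulVec,
      dotProduct_smul, vecMulVec_mulVec', dotProduct_smul, hz₁, h₁]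
    simp
  have d₂ : dotProduct (star z₂)
      ((-(Matrix.vecMulVec z₂ (star z₂)) + c • A₂).mulVec z₂) = -1 + c * l := by
    rw [Matrix.add_mulVec, dotProduct_add, Matrix.smul_mulVec,
      dotProduct_smul, Matrix.neg_mulVec, vecMulVec_mulVec',
      dotProduct_neg, dotProduct_smul, hz₂, h₂]
    simp
  have b₁ : ‖(1 + c * l : ℂ)‖ ≤ opNorm (Matrix.vecMulVec z₁ (star z₁) + c • A₁) := by
    rw [← d₁]; exact abs_dot_le_opNorm _ z₁ hz₁
  have b₂ : ‖(-1 + c * l : ℂ)‖ ≤ opNorm (-(Matrix.vecMulVec z₂ (star z₂)) + c • A₂) := by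
    rw [← d₂]; exact abs_dot_le_opNorm _ z₂ hz₂
  have key : (1 : ℝ) ≤ max ‖(1 + c * l : ℂ)‖ ‖(-1 + c * l : ℂ)‖ := by
    by_contra h
    push_neg at h
    have h1 : ‖(1 + c * l : ℂ)‖ < 1 := lt_of_le_of_lt (le_max_left _ _) h
    have h2 : ‖(-1 + c * l : ℂ)‖ < 1 := lt_of_le_of_lt (le_max_right _ _) h
    have : (2 : ℝ) = ‖((1 + c * l) - (-1 + c * l) : ℂ)‖ := by norm_num
    have h3 : ‖((1 + c * l) - (-1 + c * l) : ℂ)‖ ≤ ‖(1 + c * l : ℂ)‖ + ‖(-1 + c * l : ℂ)‖ :=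
      norm_sub_le _ _
    linarith
  calc (1 : ℝ) ≤ max ‖(1 + c * l : ℂ)‖ ‖(-1 + c * l : ℂ)‖ := key
    _ ≤ max (opNorm (Matrix.vecMulVec z₁ (star z₁) + c • A₁))
        (opNorm (-(Matrix.vecMulVec z₂ (star z₂)) + c • A₂)) := max_le_max b₁ b₂
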